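/- Let p ≥ 1 be an integer, H > 0, β ∈ [0,1), x̄ ∈ E, T ∈ s, and let g be a subgradient of ψ at T such that ‖∇f(T) + H‖T − x̄‖^{p−1}(T − x̄) + g‖ ≤ β‖∇f(T) + g‖. Then ⟨∇f(T) + g, x̄ − T⟩ ≥ (H/(1+β))·‖T − x̄‖^{p+1}. -/

import Mathlib

open scoped RealInnerProductSpace

theorem stmt1 {E : Type*} [NormedAddCommGroup E] [InnerProductSpace ℝ E]
    [FiniteDimensional ℝ E]
    (s : Set E) (hs : s.Nonempty) (hsconv : Convex ℝ s)
    (ψ : E → ℝ) (hψ : ConvexOn ℝ s ψ)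
    (f : E → ℝ) (f' : E → E) (hf' : ∀ x, HasGradientAt f (f' x) x)
    (hfconv : ConvexOn ℝ Set.univ f)
    (p : ℕ) (hp : 1 ≤ p) (H : ℝ) (hH : 0 < H)
    (β : ℝ) (hβ : β ∈ Set.Ico (0 : ℝ) 1)
    (xbar T : E) (hT : T ∈ s) (g : E)
    (hg : ∀ z ∈ s, ψ z ≥ ψ T + ⟪g, z - T⟫)
    (hineq : ‖f' T + (H * ‖T - xbar‖ ^ (p - 1)) • (T - xbar) + g‖ ≤ β * ‖f' T + g‖) :
    ⟪f' T + g, xbar - T⟫ ≥ H / (1 + β) * ‖T - xbar‖ ^ (p + 1) := by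
  obtain ⟨q, rfl⟩ : ∃ q, p = q + 1 := ⟨p - 1, (Nat.succ_pred_eq_of_pos hp).symm⟩
  obtain ⟨hβ0, hβ1⟩ := hβ
  set u : E := f' T + g with hu
  set r : E := T - xbar with hr
  by_cases hr0 : r = 0
  · have hTx : xbar - T = 0 := by
      rw [hr, sub_eq_zero] at hr0; rw [hr0, sub_self]
    have : ‖r‖ = 0 := by rw [hr0, norm_zero]
    rw [hTx, inner_zero_right, this]
    simp
  · have ht : 0 < ‖r‖ := norm_pos_iff.mpr hr0
    set c : ℝ := H * ‖r‖ ^ q with hc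
    have hcpos : 0 < c := mul_pos hH (pow_pos ht q)
    have h1 : ‖u + c • r‖ ≤ β * ‖u‖ := by
      have : f' T + c • r + g = u + c • r := by rw [hu]; abel
      simpa [this, ← hc] using hineq
    have h2 : ‖u + c • r‖ ^ 2 = ‖u‖ ^ 2 + 2 * (c * ⟪u, r⟫) + (c * ‖r‖) ^ 2 := by
      rw [@norm_add_sq_real, real_inner_smul_right, norm_smul, Real.norm_eq_abs,
        abs_of_pos hcpos]
    have h3 : c * ‖r‖ ≤ ‖u + c • r‖ + ‖u‖ := by
      have := norm_add_le (u + c • r) (-u)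
      simpa [norm_smul, Real.norm_eq_abs, abs_of_pos hcpos, add_comm] using this
    have h4 : ‖u + c • r‖ ^ 2 ≤ (β * ‖u‖) ^ 2 := by
      have := norm_nonneg (u + c • r)
      nlinarith [norm_nonneg u]
    have hxT : xbar - T = -r := by rw [hr]; abel
    rw [hxT, inner_neg_right]
    have hpow : ‖r‖ ^ (q + 1 + 1) = ‖r‖ ^ q * ‖r‖ * ‖r‖ := by ring
    rw [hpow]
    have hβ1' : 0 < 1 + β := by linarith
    rw [ge_iff_le, div_mul_eq_mul_div, div_le_iff₀ hβ1']
    have hct : c * ‖r‖ ≤ (1 + β) * ‖u‖ := by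
      calc c * ‖r‖ ≤ ‖u + c • r‖ + ‖u‖ := h3
        _ ≤ β * ‖u‖ + ‖u‖ := by linarith
        _ = (1 + β) * ‖u‖ := by ring
    -- key: 2c * (-⟪u,r⟫) ≥ (1-β²)‖u‖² + (c‖r‖)² ≥ 2(c‖r‖)²/(1+β)
    have hkey : 2 * (c * ⟪u, r⟫) ≤ (β ^ 2 - 1) * ‖u‖ ^ 2 - (c * ‖r‖) ^ 2 := by
      nlinarith [h4, h2]
    have hU : 0 ≤ ‖u‖ := norm_nonneg u
    have hgoal : H * (‖r‖ ^ q * ‖r‖ * ‖r‖) = c * ‖r‖ * ‖r‖ := by rw [hc]; ring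
    nlinarith [mul_pos hcpos ht, sq_nonneg (c * ‖r‖ - (1 + β) * ‖u‖),
      mul_nonneg (mul_nonneg hcpos.le ht.le) hU,
      mul_le_mul_of_nonneg_left hkey hβ1'.le,
      mul_le_mul_of_nonneg_right hct (mul_pos hcpos ht).le]
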